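/- For all real parameters λ > 0 with λ ≠ 1 and φ > 0, the SMPtW density integrates to one: ∫₀^∞ ((log λ) φ y^(φ−1) exp((log λ)·exp(−y^φ) − y^φ))/(λ − 1) dy = 1. -/

import Mathlib

open Real MeasureTheory Filter Topology

/-- The SMPtW probability density function with parameters `lam > 0`, `lam ≠ 1`, `phi > 0`. -/
noncomputable def smptwPDF (lam phi y : ℝ) : ℝ :=
  (Real.log lam * phi * y ^ (phi - 1) *
    Real.exp (Real.log lam * Real.exp (-(y ^ phi)) - y ^ phi)) / (lam - 1)

/-- the SMPtW density integrates to one over `(0, ∞)`. -/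
theorem smptw_pdf_integrates_to_one (lam phi : ℝ)
    (hlam : 0 < lam) (hlam1 : lam ≠ 1) (hphi : 0 < phi) :
    ∫ y in Set.Ioi (0 : ℝ), smptwPDF lam phi y = 1 := by
  have hlamne : lam - 1 ≠ 0 := sub_ne_zero.2 hlam1
  set g : ℝ → ℝ := fun y => -(Real.exp (Real.log lam * Real.exp (-(y ^ phi))) / (lam - 1))
    with hgdef
  have hsign : 0 < Real.log lam / (lam - 1) := by
    rcases lt_or_gt_of_ne hlam1 with h | h
    · exact div_pos_of_neg_of_neg (Real.log_neg hlam h) (by linarith)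
    · exact div_pos (Real.log_pos h) (by linarith)
  have hderiv : ∀ y ∈ Set.Ioi (0 : ℝ), HasDerivAt g (smptwPDF lam phi y) y := by
    intro y hy
    have hy0 : (0 : ℝ) < y := hy
    have h1 : HasDerivAt (fun y : ℝ => y ^ phi) (phi * y ^ (phi - 1)) y :=
      Real.hasDerivAt_rpow_const (Or.inl hy0.ne')
    have h2 := ((h1.neg.exp.const_mul (Real.log lam)).exp.div_const (lam - 1)).neg
    refine h2.congr_deriv ?_
    symm
    simp only [Pi.neg_apply]
    unfold smptwPDF
    rw [Real.exp_sub, Real.exp_neg]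
    have := Real.exp_ne_zero (y ^ phi)
    field_simp
  have hpos : ∀ y ∈ Set.Ioi (0 : ℝ), 0 ≤ smptwPDF lam phi y := by
    intro y hy
    have hy0 : (0 : ℝ) < y := hy
    unfold smptwPDF
    have hyp : 0 ≤ y ^ (phi - 1) := Real.rpow_nonneg hy0.le _
    have := hsign.le
    have h := mul_nonneg (mul_nonneg (mul_nonneg this hphi.le) hyp)
      (Real.exp_nonneg (Real.log lam * Real.exp (-(y ^ phi)) - y ^ phi))
    calc (0:ℝ) ≤ Real.log lam / (lam - 1) * phi * y ^ (phi - 1) *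
        Real.exp (Real.log lam * Real.exp (-(y ^ phi)) - y ^ phi) := h
      _ = _ := by ring
  have hcont : ContinuousWithinAt g (Set.Ici (0 : ℝ)) 0 := by
    have h1 : ContinuousAt (fun y : ℝ => y ^ phi) 0 :=
      Real.continuousAt_rpow_const 0 phi (Or.inr hphi.le)
    have hca : ContinuousAt g 0 :=
      ((h1.neg.rexp.const_mul (Real.log lam)).rexp.div_const (lam - 1)).neg
    exact hca.continuousWithinAt
  have htend : Tendsto g atTop (𝓝 ((-1 : ℝ) / (lam - 1))) := by
    have h1 : Tendsto (fun y : ℝ => -(y ^ phi)) atTop atBot :=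
      tendsto_neg_atTop_atBot.comp (tendsto_rpow_atTop hphi)
    have h2 : Tendsto (fun y : ℝ => Real.exp (-(y ^ phi))) atTop (𝓝 0) :=
      Real.tendsto_exp_atBot.comp h1
    have h3 : Tendsto (fun y : ℝ => Real.log lam * Real.exp (-(y ^ phi))) atTop (𝓝 0) := by
      simpa using h2.const_mul (Real.log lam)
    have h4 : Tendsto (fun y : ℝ => Real.exp (Real.log lam * Real.exp (-(y ^ phi))))
        atTop (𝓝 1) := by simpa [Function.comp_def] using (Real.continuous_exp.tendsto 0).comp h3
    simpa [hgdef, neg_div] using ((h4.div_const (lam - 1)).neg)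
  have := integral_Ioi_of_hasDerivAt_of_nonneg hcont hderiv hpos htend
  rw [this, hgdef]
  simp only [Real.zero_rpow hphi.ne', neg_zero, Real.exp_zero, mul_one, Real.exp_log hlam]
  field_simp
  ring
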